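/- Let εs > 0 be fixed and for each P > 0 set αs = εs/P and P0 = P. Then the Scheme II outage probability 1 − e^{−αs}/(1 + αs·P0) tends to εs/(1 + εs) > 0 as P → ∞. -/

import Mathlib

open Filter

theorem stmt_12 (εs : ℝ) (hεs : 0 < εs) :
    Tendsto (fun P : ℝ => 1 - Real.exp (-(εs / P)) / (1 + (εs / P) * P)) atTop
        (nhds (εs / (1 + εs))) ∧
      0 < εs / (1 + εs) := by
  have h1 : (0:ℝ) < 1 + εs := by linarith
  constructor
  · have hdiv : Tendsto (fun P : ℝ => εs / P) atTop (nhds 0) :=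
      tendsto_const_nhds.div_atTop tendsto_id
    have hexp : Tendsto (fun P : ℝ => Real.exp (-(εs / P))) atTop (nhds 1) := by
      have := (Real.continuous_exp.tendsto 0).comp (by simpa using hdiv.neg)
      simpa [Function.comp_def] using this
    have hmain : Tendsto (fun P : ℝ => 1 - Real.exp (-(εs / P)) / (1 + εs)) atTop
        (nhds (εs / (1 + εs))) := by
      have := (tendsto_const_nhds (x := (1:ℝ))).sub (hexp.div_const (1 + εs))
      convert this using 2
      field_simp
      ring
    refine hmain.congr' ?_
    filter_upwards [eventually_gt_atTop (0:ℝ)] with P hP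
    rw [div_mul_cancel₀ _ (ne_of_gt hP)]
  · positivity
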